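/- Let N ≥ 1 be an integer and 1 < p < 2. Suppose (q_n) is a sequence of reals with q_n > p and q_n → ∞, and for each n let v_n be a radial Neumann solution with exponent q_n satisfying the high-energy condition ∫_0^1 r^{N−1}( v_n'(r)^p/p + v_n(r)^p/p − v_n(r)^{q_n}/q_n ) dr > (1/p − 1/q_n)·(1/N). Then, as n → ∞, v_n converges to the constant function 1 uniformly on [0,1] and ∫_0^1 r^{N−1} v_n'(r)^p dr → 0. -/

import Mathlib

open Real Set Filter intervalIntegral

/-- `v : [0,1] → ℝ` is a radial Neumann solution with exponent `q` of
`-Δ_p v + v^{p-1} = v^{q-1}` in the unit ball of `ℝ^N`, in the cone of positive,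
radially nondecreasing functions; `v'` is its derivative on `[0,1]`. -/
def IsRadialNeumannSol (N : ℕ) (p q : ℝ) (v v' : ℝ → ℝ) : Prop :=
  (∀ r ∈ Set.Icc (0:ℝ) 1, HasDerivWithinAt v (v' r) (Set.Icc (0:ℝ) 1) r) ∧
  ContinuousOn v' (Set.Icc (0:ℝ) 1) ∧
  (∀ r ∈ Set.Icc (0:ℝ) 1, 0 < v r) ∧
  MonotoneOn v (Set.Icc (0:ℝ) 1) ∧
  (∀ r ∈ Set.Icc (0:ℝ) 1, 0 ≤ v' r) ∧
  v' 0 = 0 ∧ v' 1 = 0 ∧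
  (∀ r ∈ Set.Ioo (0:ℝ) 1,
    HasDerivAt (fun s => s ^ (N - 1) * v' s ^ (p - 1))
      (r ^ (N - 1) * (v r ^ (p - 1) - v r ^ (q - 1))) r)

lemma growth_aux (K ε p : ℝ) (hK : 0 < K) (hε : 0 < ε) (hp : 1 ≤ p) :
    ∀ᶠ t in atTop, K * (t - 1) ≤ (1 + ε) ^ (t - p) := by
  have hc : 0 < Real.log (1 + ε) := Real.log_pos (by linarith)
  set c := Real.log (1 + ε) with hcdef
  filter_upwards [eventually_ge_atTop (p + max p (8 * K / c ^ 2))] with t ht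
  have hu : max p (8 * K / c ^ 2) ≤ t - p := by linarith
  have hup : p ≤ t - p := le_trans (le_max_left _ _) hu
  have huK : 8 * K / c ^ 2 ≤ t - p := le_trans (le_max_right _ _) hu
  have hu0 : 0 ≤ t - p := le_trans (by linarith) hup
  have hrw : (1 + ε) ^ (t - p) = Real.exp ((t - p) * c) := by
    rw [Real.rpow_def_of_pos (by linarith), mul_comm]
  have h1 : (t - p) * c / 2 ≤ Real.exp ((t - p) * c / 2) := by
    linarith [Real.add_one_le_exp ((t - p) * c / 2)]
  have h2 : Real.exp ((t - p) * c) = Real.exp ((t - p) * c / 2) * Real.exp ((t - p) * c / 2) := by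
    rw [← Real.exp_add]; ring_nf
  have hhalf : 0 ≤ (t - p) * c / 2 := by positivity
  have hexp : ((t - p) * c / 2) ^ 2 ≤ Real.exp ((t - p) * c) := by
    rw [h2]; nlinarith
  have h8 : 8 * K ≤ (t - p) * c ^ 2 := by
    rw [div_le_iff₀ (by positivity)] at huK; linarith
  have hfin : K * (t - 1) ≤ ((t - p) * c / 2) ^ 2 := by
    nlinarith [mul_le_mul_of_nonneg_left h8 hu0, hK.le, hup]
  rw [hrw]; linarith

set_option maxHeartbeats 1000000 in
lemma radial_master {N : ℕ} {p q : ℝ} {v v' : ℝ → ℝ}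
    (hN : 1 ≤ N) (hp1 : 1 < p) (hp2 : p < 2) (hpq : p < q) (hq2 : 2 ≤ q)
    (hsol : IsRadialNeumannSol N p q v v')
    (hE : (1 / p - 1 / q) * (1 / (N : ℝ)) <
      ∫ r in (0:ℝ)..1, r ^ (N - 1) * (v' r ^ p / p + v r ^ p / p - v r ^ q / q)) :
    1 ≤ v 1 ∧ v 0 ≤ 1 ∧
    v 1 ^ (q - p) ≤ 2 ^ (N + 1) * (q - 1) ∧
    (∀ ε : ℝ, 0 < ε → ε ≤ 1 →
      v 1 ≤ 1 + ((ε / 4) ^ (p - 1)) ^ N * (1 - (1 - ε / 2) ^ (p - 1)) / 3 → 1 - ε < v 0) ∧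
    (∫ r in (0:ℝ)..1, r ^ (N - 1) * v' r ^ p) ≤ (v 1 ^ p - v 0 ^ p) / N := by
  obtain ⟨hv, hv'c, hvpos, hmono, hv'nn, hv'0, hv'1, hW⟩ := hsol
  have h01 : (0:ℝ) ≤ 1 := zero_le_one
  have hp0 : (0:ℝ) < p := lt_trans one_pos hp1
  have hq0 : (0:ℝ) < q := lt_trans hp0 hpq
  have hpm1 : (0:ℝ) < p - 1 := sub_pos.2 hp1
  have hqm1 : (0:ℝ) < q - 1 := by linarith
  have hNpos : (0:ℝ) < N := by exact_mod_cast hN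
  have hNn : (N - 1) + 1 = N := Nat.succ_pred_eq_of_pos hN
  have hcast : ((N - 1 : ℕ) : ℝ) = (N : ℝ) - 1 := by
    have := Nat.cast_sub hN (R := ℝ); simpa using this
  have hcv : ContinuousOn v (Icc 0 1) := fun r hr => (hv r hr).continuousWithinAt
  have hM0 : 0 < v 1 := hvpos 1 (right_mem_Icc.2 h01)
  have hm0 : 0 < v 0 := hvpos 0 (left_mem_Icc.2 h01)
  have hvleM : ∀ r ∈ Icc (0:ℝ) 1, v r ≤ v 1 := fun r hr => hmono hr (right_mem_Icc.2 h01) hr.2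
  have hvgem : ∀ r ∈ Icc (0:ℝ) 1, v 0 ≤ v r := fun r hr => hmono (left_mem_Icc.2 h01) hr hr.1
  -- continuity helpers
  have hcmon : ContinuousOn (fun s : ℝ => s ^ (N - 1)) (Icc 0 1) := (continuous_pow _).continuousOn
  have hcvp : ∀ c : ℝ, ContinuousOn (fun s => v s ^ c) (Icc 0 1) :=
    fun c => hcv.rpow_const (fun s hs => Or.inl (hvpos s hs).ne')
  have hcv'p : ∀ c : ℝ, 0 ≤ c → ContinuousOn (fun s => v' s ^ c) (Icc 0 1) :=
    fun c hc => hv'c.rpow_const (fun s _ => Or.inr hc)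
  have huIcc : uIcc (0:ℝ) 1 = Icc 0 1 := uIcc_of_le h01
  have hii : ∀ f : ℝ → ℝ, ContinuousOn f (Icc 0 1) → IntervalIntegrable f MeasureTheory.volume 0 1 :=
    fun f hf => (huIcc ▸ hf : ContinuousOn f (uIcc 0 1)).intervalIntegrable
  have hintv : ∀ c : ℝ, IntervalIntegrable (fun s => s ^ (N - 1) * v s ^ c)
      MeasureTheory.volume 0 1 := fun c => hii _ (hcmon.mul (hcvp c))
  have hintg1 : IntervalIntegrable (fun s => s ^ (N - 1) * (v s ^ (p - 1) - v s ^ (q - 1)))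
      MeasureTheory.volume 0 1 := hii _ (hcmon.mul ((hcvp (p - 1)).sub (hcvp (q - 1))))
  have hintv' : IntervalIntegrable v' MeasureTheory.volume 0 1 := hii _ hv'c
  -- integral of the monomial
  have hIpow : ∀ a b : ℝ, (∫ s in a..b, s ^ (N - 1)) = (b ^ N - a ^ N) / N := by
    intro a b
    rw [integral_pow, hNn, hcast]
    norm_num
  have hIconst : ∀ (a b C : ℝ), (∫ s in a..b, s ^ (N - 1) * C) = (b ^ N - a ^ N) / N * C := by
    intro a b C
    rw [intervalIntegral.integral_mul_const, hIpow]
  -- the function W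
  have hcW : ContinuousOn (fun s : ℝ => s ^ (N - 1) * v' s ^ (p - 1)) (Icc 0 1) :=
    hcmon.mul (hcv'p _ hpm1.le)
  have hW0 : (0:ℝ) ^ (N - 1) * v' 0 ^ (p - 1) = 0 := by
    rw [hv'0, Real.zero_rpow hpm1.ne', mul_zero]
  have hW1 : (1:ℝ) ^ (N - 1) * v' 1 ^ (p - 1) = 0 := by
    rw [hv'1, Real.zero_rpow hpm1.ne', mul_zero]
  have hWr : ∀ r ∈ Icc (0:ℝ) 1, r ^ (N - 1) * v' r ^ (p - 1)
      = ∫ s in (0:ℝ)..r, s ^ (N - 1) * (v s ^ (p - 1) - v s ^ (q - 1)) := by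
    intro r hr
    have hsub : uIcc (0:ℝ) r ⊆ uIcc (0:ℝ) 1 := by
      rw [huIcc, uIcc_of_le hr.1]; exact Icc_subset_Icc le_rfl hr.2
    have := integral_eq_sub_of_hasDeriv_right_of_le hr.1
      (hcW.mono (Icc_subset_Icc le_rfl hr.2))
      (fun x hx => (hW x ⟨hx.1, lt_of_lt_of_le hx.2 hr.2⟩).hasDerivWithinAt)
      (hintg1.mono_set hsub)
    rw [hW0, sub_zero] at this
    exact this.symm
  have hA0 : (∫ s in (0:ℝ)..1, s ^ (N - 1) * (v s ^ (p - 1) - v s ^ (q - 1))) = 0 := by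
    have := hWr 1 (right_mem_Icc.2 h01)
    rw [hW1] at this
    exact this.symm
  have hA : (∫ s in (0:ℝ)..1, s ^ (N - 1) * v s ^ (p - 1))
      = ∫ s in (0:ℝ)..1, s ^ (N - 1) * v s ^ (q - 1) := by
    have hsplit : (∫ s in (0:ℝ)..1, s ^ (N - 1) * (v s ^ (p - 1) - v s ^ (q - 1)))
        = (∫ s in (0:ℝ)..1, s ^ (N - 1) * v s ^ (p - 1))
          - ∫ s in (0:ℝ)..1, s ^ (N - 1) * v s ^ (q - 1) := by
      rw [← intervalIntegral.integral_sub (hintv (p - 1)) (hintv (q - 1))]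
      apply intervalIntegral.integral_congr
      intro x _
      ring
    rw [hsplit] at hA0
    linarith
  -- Fact 1 : 1 ≤ v 1
  have hM1 : 1 ≤ v 1 := by
    by_contra h
    push_neg at h
    have hpos : ∀ x ∈ Ioo (0:ℝ) 1, 0 < x ^ (N - 1) * (v x ^ (p - 1) - v x ^ (q - 1)) := by
      intro x hx
      have hx1 : x ∈ Icc (0:ℝ) 1 := ⟨hx.1.le, hx.2.le⟩
      have hvx : 0 < v x := hvpos x hx1
      have hvlt : v x < 1 := lt_of_le_of_lt (hvleM x hx1) h
      have := Real.rpow_lt_rpow_of_exponent_gt hvx hvlt (by linarith : p - 1 < q - 1)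
      exact mul_pos (pow_pos hx.1 _) (sub_pos.2 this)
    have := intervalIntegral_pos_of_pos_on hintg1 hpos one_pos
    rw [hA0] at this
    exact lt_irrefl _ this
  -- Fact 2 : v 0 ≤ 1
  have hm1 : v 0 ≤ 1 := by
    by_contra h
    push_neg at h
    have hpos : ∀ x ∈ Ioo (0:ℝ) 1,
        0 < -(x ^ (N - 1) * (v x ^ (p - 1) - v x ^ (q - 1))) := by
      intro x hx
      have hx1 : x ∈ Icc (0:ℝ) 1 := ⟨hx.1.le, hx.2.le⟩
      have hvgt : 1 < v x := lt_of_lt_of_le h (hvgem x hx1)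
      have := Real.rpow_lt_rpow_of_exponent_lt hvgt (by linarith : p - 1 < q - 1)
      have h2 : v x ^ (p - 1) - v x ^ (q - 1) < 0 := by linarith
      have := mul_pos (pow_pos hx.1 (N - 1)) (neg_pos.2 h2)
      linarith [this, mul_neg (x ^ (N - 1)) (v x ^ (p - 1) - v x ^ (q - 1))]
    have := intervalIntegral_pos_of_pos_on hintg1.neg hpos one_pos
    simp only [Pi.neg_apply, intervalIntegral.integral_neg, hA0, neg_zero] at this
    exact lt_irrefl _ this
  -- pointwise bound on v'
  have hv'bound : ∀ r ∈ Icc (0:ℝ) 1, v' r ≤ v 1 * r ^ (p - 1)⁻¹ := by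
    intro r hr
    rcases eq_or_lt_of_le hr.1 with h0r | h0r
    · rw [← h0r, hv'0, Real.zero_rpow (inv_ne_zero hpm1.ne'), mul_zero]
    · have hsub : uIcc (0:ℝ) r ⊆ uIcc (0:ℝ) 1 := by
        rw [huIcc, uIcc_of_le hr.1]; exact Icc_subset_Icc le_rfl hr.2
      have hle : (∫ s in (0:ℝ)..r, s ^ (N - 1) * (v s ^ (p - 1) - v s ^ (q - 1)))
          ≤ ∫ s in (0:ℝ)..r, s ^ (N - 1) * v 1 ^ (p - 1) := by
        apply intervalIntegral.integral_mono_on hr.1 (hintg1.mono_set hsub)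
          ((hii _ (hcmon.mul continuousOn_const)).mono_set hsub)
        intro x hx
        have hx1 : x ∈ Icc (0:ℝ) 1 := ⟨hx.1, hx.2.trans hr.2⟩
        have h1 : v x ^ (p - 1) - v x ^ (q - 1) ≤ v 1 ^ (p - 1) :=
          le_trans (sub_le_self _ (Real.rpow_nonneg (hvpos x hx1).le _))
            (Real.rpow_le_rpow (hvpos x hx1).le (hvleM x hx1) hpm1.le)
        exact mul_le_mul_of_nonneg_left h1 (pow_nonneg hx.1 _)
      rw [← hWr r hr] at hle
      rw [hIconst] at hle
      have hr0N : (0:ℝ) ^ N = 0 := zero_pow (by omega)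
      rw [hr0N, sub_zero] at hle
      have hrNsplit : r ^ N = r ^ (N - 1) * r := by rw [← pow_succ, hNn]
      have hdivle : r ^ N / (N:ℝ) ≤ r ^ N := by
        apply div_le_self (pow_nonneg hr.1 _)
        exact_mod_cast hN
      have hkey : v' r ^ (p - 1) * r ^ (N - 1) ≤ (r * v 1 ^ (p - 1)) * r ^ (N - 1) := by
        have h2 : r ^ (N - 1) * v' r ^ (p - 1) ≤ r ^ N * v 1 ^ (p - 1) := by
          calc r ^ (N - 1) * v' r ^ (p - 1) ≤ r ^ N / N * v 1 ^ (p - 1) := hle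
          _ ≤ r ^ N * v 1 ^ (p - 1) :=
            mul_le_mul_of_nonneg_right hdivle (Real.rpow_nonneg hM0.le _)
        rw [hrNsplit] at h2
        nlinarith [h2]
      have hcancel : v' r ^ (p - 1) ≤ r * v 1 ^ (p - 1) :=
        le_of_mul_le_mul_right hkey (pow_pos h0r _)
      have hrpow : (v 1 * r ^ (p - 1)⁻¹) ^ (p - 1) = v 1 ^ (p - 1) * r := by
        rw [Real.mul_rpow hM0.le (Real.rpow_nonneg h0r.le _),
          Real.rpow_inv_rpow h0r.le hpm1.ne']
      by_contra hcon
      push_neg at hcon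
      have := Real.rpow_lt_rpow (by positivity) hcon hpm1
      rw [hrpow] at this
      nlinarith [hcancel, this]
  have hv'leM : ∀ r ∈ Icc (0:ℝ) 1, v' r ≤ v 1 := by
    intro r hr
    refine le_trans (hv'bound r hr) ?_
    have : r ^ (p - 1)⁻¹ ≤ 1 := Real.rpow_le_one hr.1 hr.2 (inv_nonneg.2 hpm1.le)
    nlinarith [hM0]
  -- FTC for v
  have hvftc : ∀ a b : ℝ, 0 ≤ a → a ≤ b → b ≤ 1 → (∫ s in a..b, v' s) = v b - v a := by
    intro a b ha hab hb1
    have hsub : uIcc a b ⊆ uIcc (0:ℝ) 1 := by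
      rw [huIcc, uIcc_of_le hab]; exact Icc_subset_Icc ha hb1
    apply integral_eq_sub_of_hasDeriv_right_of_le hab (hcv.mono (Icc_subset_Icc ha hb1))
      (fun x hx => ((hv x ⟨le_trans ha hx.1.le, le_trans hx.2.le hb1⟩).hasDerivAt
        (Icc_mem_nhds (lt_of_le_of_lt ha hx.1) (lt_of_lt_of_le hx.2 hb1))).hasDerivWithinAt)
      (hintv'.mono_set hsub)
    -- identity (B): ∫ s^{N-1}(v'^p + v^p - v^q) = 0
  have hintB : IntervalIntegrable (fun s => s ^ (N - 1) * (v' s ^ p + v s ^ p - v s ^ q))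
      MeasureTheory.volume 0 1 :=
    hii _ (hcmon.mul (((hcv'p p hp0.le).add (hcvp p)).sub (hcvp q)))
  have hB : (∫ s in (0:ℝ)..1, s ^ (N - 1) * (v' s ^ p + v s ^ p - v s ^ q)) = 0 := by
    have hderiv : ∀ x ∈ Ioo (0:ℝ) 1,
        HasDerivAt (fun s => (s ^ (N - 1) * v' s ^ (p - 1)) * v s)
          (x ^ (N - 1) * (v' x ^ p + v x ^ p - v x ^ q)) x := by
      intro x hx
      have hx1 : x ∈ Icc (0:ℝ) 1 := ⟨hx.1.le, hx.2.le⟩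
      have h1 := (hW x hx).mul ((hv x hx1).hasDerivAt (Icc_mem_nhds hx.1 hx.2))
      refine h1.congr_deriv ?_
      have hvx : v x ≠ 0 := (hvpos x hx1).ne'
      have e1 : v x ^ (p - 1) * v x = v x ^ p := by
        rw [← Real.rpow_add_one hvx (p - 1), sub_add_cancel]
      have e2 : v x ^ (q - 1) * v x = v x ^ q := by
        rw [← Real.rpow_add_one hvx (q - 1), sub_add_cancel]
      have e3 : v' x ^ (p - 1) * v' x = v' x ^ p := by
        rcases eq_or_ne (v' x) 0 with h | h
        · rw [h, mul_zero, Real.zero_rpow hp0.ne']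
        · rw [← Real.rpow_add_one h (p - 1), sub_add_cancel]
      rw [← e1, ← e2, ← e3]
      ring
    have hcont : ContinuousOn (fun s : ℝ => (s ^ (N - 1) * v' s ^ (p - 1)) * v s) (Icc 0 1) :=
      hcW.mul hcv
    have hftc := integral_eq_sub_of_hasDeriv_right_of_le h01 hcont
      (fun x hx => (hderiv x hx).hasDerivWithinAt) hintB
    rw [hftc, hW0, hW1]
    ring
  -- consequence (C): 1/N < ∫ s^{N-1} v^q
  have hC : 1 / (N:ℝ) < ∫ s in (0:ℝ)..1, s ^ (N - 1) * v s ^ q := by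
    have hpq' : 0 < 1 / p - 1 / q := by
      rw [sub_pos]
      exact one_div_lt_one_div_of_lt hp0 hpq
    have heq : (∫ r in (0:ℝ)..1, r ^ (N - 1) * (v' r ^ p / p + v r ^ p / p - v r ^ q / q))
        = (1 / p) * (∫ s in (0:ℝ)..1, s ^ (N - 1) * (v' s ^ p + v s ^ p - v s ^ q))
          + (1 / p - 1 / q) * ∫ s in (0:ℝ)..1, s ^ (N - 1) * v s ^ q := by
      rw [← intervalIntegral.integral_const_mul, ← intervalIntegral.integral_const_mul,
        ← intervalIntegral.integral_add (hintB.const_mul _) ((hintv q).const_mul _)]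
      apply intervalIntegral.integral_congr
      intro x _
      have hpne : p ≠ 0 := ne_of_gt (lt_trans one_pos hp1)
      have hqne : q ≠ 0 := by positivity
      field_simp
      ring
    rw [heq, hB, mul_zero, zero_add] at hE
    have := (mul_lt_mul_iff_right₀ hpq').1 hE
    linarith
  -- ∫ s^{N-1} v^{p-1} ≤ v1^{p-1}/N
  have hIp : (∫ s in (0:ℝ)..1, s ^ (N - 1) * v s ^ (p - 1)) ≤ v 1 ^ (p - 1) / N := by
    have h1 : (∫ s in (0:ℝ)..1, s ^ (N - 1) * v s ^ (p - 1))
        ≤ ∫ s in (0:ℝ)..1, s ^ (N - 1) * v 1 ^ (p - 1) := by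
      apply intervalIntegral.integral_mono_on h01 (hintv (p - 1))
        (hii _ (hcmon.mul continuousOn_const))
      intro x hx
      exact mul_le_mul_of_nonneg_left
        (Real.rpow_le_rpow (hvpos x hx).le (hvleM x hx) hpm1.le) (pow_nonneg hx.1 _)
    rw [hIconst] at h1
    calc (∫ s in (0:ℝ)..1, s ^ (N - 1) * v s ^ (p - 1))
        ≤ ((1:ℝ) ^ N - 0 ^ N) / N * v 1 ^ (p - 1) := h1
      _ = v 1 ^ (p - 1) / N := by
          rw [one_pow, zero_pow (by omega : N ≠ 0)]
          ring
  -- ∫ s^{N-1} v^q ≤ v1 * ∫ s^{N-1} v^{q-1}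
  have hIq : (∫ s in (0:ℝ)..1, s ^ (N - 1) * v s ^ q)
      ≤ v 1 * ∫ s in (0:ℝ)..1, s ^ (N - 1) * v s ^ (q - 1) := by
    rw [← intervalIntegral.integral_const_mul]
    apply intervalIntegral.integral_mono_on h01 (hintv q) ((hintv (q - 1)).const_mul _)
    intro x hx
    have hvx : v x ≠ 0 := (hvpos x hx).ne'
    have e2 : v x ^ q = v x ^ (q - 1) * v x := by
      rw [← Real.rpow_add_one hvx (q - 1), sub_add_cancel]
    rw [e2]
    have h2 := mul_le_mul_of_nonneg_left (hvleM x hx)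
      (mul_nonneg (pow_nonneg hx.1 (N - 1)) (Real.rpow_nonneg (hvpos x hx).le (q - 1)))
    nlinarith [h2]
    -- Fact 3 : (v 1)^(q-p) ≤ 2^(N+1) (q-1)
  have hF3 : v 1 ^ (q - p) ≤ 2 ^ (N + 1) * (q - 1) := by
    set δ : ℝ := 1 / (2 * (q - 1)) with hδdef
    have hδpos : 0 < δ := by positivity
    have hδle : δ ≤ 1 / 2 := by
      rw [hδdef, div_le_div_iff₀ (by linarith) (by norm_num)]
      linarith
    have h1δ : (0:ℝ) ≤ 1 - δ := by linarith
    have hvlow : ∀ r ∈ Icc (1 - δ) 1, v 1 * (1 - δ) ≤ v r := by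
      intro r hr
      have hr1 : r ∈ Icc (0:ℝ) 1 := ⟨le_trans h1δ hr.1, hr.2⟩
      have hftc := hvftc r 1 hr1.1 hr.2 le_rfl
      have hsub : uIcc r 1 ⊆ uIcc (0:ℝ) 1 := by
        rw [huIcc, uIcc_of_le hr.2]; exact Icc_subset_Icc hr1.1 le_rfl
      have hbd : (∫ s in r..1, v' s) ≤ ∫ s in r..1, v 1 := by
        apply intervalIntegral.integral_mono_on hr.2 (hintv'.mono_set hsub)
          intervalIntegrable_const
        intro x hx
        exact hv'leM x ⟨le_trans hr1.1 hx.1, hx.2⟩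
      rw [hftc, intervalIntegral.integral_const, smul_eq_mul] at hbd
      have h3 : (1 - r) * v 1 ≤ δ * v 1 :=
        mul_le_mul_of_nonneg_right (by linarith [hr.1]) hM0.le
      nlinarith [h3, hbd]
    have hint1 : IntervalIntegrable (fun s => s ^ (N - 1) * v s ^ (q - 1))
        MeasureTheory.volume 0 (1 - δ) :=
      (hintv (q - 1)).mono_set (by
        rw [huIcc, uIcc_of_le h1δ]; exact Icc_subset_Icc le_rfl (by linarith))
    have hint2 : IntervalIntegrable (fun s => s ^ (N - 1) * v s ^ (q - 1))
        MeasureTheory.volume (1 - δ) 1 :=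
      (hintv (q - 1)).mono_set (by
        rw [huIcc, uIcc_of_le (by linarith : (1:ℝ) - δ ≤ 1)]
        exact Icc_subset_Icc h1δ le_rfl)
    have hsplit : (∫ s in (0:ℝ)..1, s ^ (N - 1) * v s ^ (q - 1))
        = (∫ s in (0:ℝ)..(1 - δ), s ^ (N - 1) * v s ^ (q - 1))
          + ∫ s in (1 - δ)..1, s ^ (N - 1) * v s ^ (q - 1) :=
      (intervalIntegral.integral_add_adjacent_intervals hint1 hint2).symm
    have hfirst : 0 ≤ ∫ s in (0:ℝ)..(1 - δ), s ^ (N - 1) * v s ^ (q - 1) := by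
      apply intervalIntegral.integral_nonneg h1δ
      intro x hx
      have hx1 : x ∈ Icc (0:ℝ) 1 := ⟨hx.1, le_trans hx.2 (by linarith)⟩
      exact mul_nonneg (pow_nonneg hx.1 _) (Real.rpow_nonneg (hvpos x hx1).le _)
    have hsecond : δ * ((1 - δ) ^ (N - 1) * (v 1 * (1 - δ)) ^ (q - 1))
        ≤ ∫ s in (1 - δ)..1, s ^ (N - 1) * v s ^ (q - 1) := by
      have hmono2 : (∫ s in (1 - δ)..1, (1 - δ) ^ (N - 1) * (v 1 * (1 - δ)) ^ (q - 1))
          ≤ ∫ s in (1 - δ)..1, s ^ (N - 1) * v s ^ (q - 1) := by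
        apply intervalIntegral.integral_mono_on (by linarith) intervalIntegrable_const hint2
        intro x hx
        have hx0 : 0 ≤ x := le_trans h1δ hx.1
        have hx1 : x ∈ Icc (0:ℝ) 1 := ⟨hx0, hx.2⟩
        apply mul_le_mul (pow_le_pow_left₀ h1δ hx.1 _)
          (Real.rpow_le_rpow (by positivity) (hvlow x hx) hqm1.le)
          (Real.rpow_nonneg (by positivity) _) (pow_nonneg hx0 _)
      rw [intervalIntegral.integral_const, smul_eq_mul] at hmono2
      calc δ * ((1 - δ) ^ (N - 1) * (v 1 * (1 - δ)) ^ (q - 1))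
          = (1 - (1 - δ)) * ((1 - δ) ^ (N - 1) * (v 1 * (1 - δ)) ^ (q - 1)) := by ring_nf
        _ ≤ _ := hmono2
    have hchain : δ * ((1 - δ) ^ (N - 1) * (v 1 * (1 - δ)) ^ (q - 1)) ≤ v 1 ^ (p - 1) / N := by
      calc δ * ((1 - δ) ^ (N - 1) * (v 1 * (1 - δ)) ^ (q - 1))
          ≤ ∫ s in (1 - δ)..1, s ^ (N - 1) * v s ^ (q - 1) := hsecond
        _ ≤ ∫ s in (0:ℝ)..1, s ^ (N - 1) * v s ^ (q - 1) := by rw [hsplit]; linarith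
        _ = ∫ s in (0:ℝ)..1, s ^ (N - 1) * v s ^ (p - 1) := hA.symm
        _ ≤ v 1 ^ (p - 1) / N := hIp
    -- Bernoulli bound
    have hBern : (1:ℝ) / 2 ≤ (1 - δ) ^ (q - 1) := by
      have hb := one_add_mul_self_le_rpow_one_add (by linarith : (-1:ℝ) ≤ -δ)
        (by linarith : 1 ≤ q - 1)
      have hδq : (q - 1) * δ = 1 / 2 := by
        rw [hδdef]; field_simp
      have : 1 + (q - 1) * -δ = 1 / 2 := by rw [mul_neg, hδq]; norm_num
      rw [this] at hb
      have : (1 + -δ) = 1 - δ := by ring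
      rwa [this] at hb
    have hpowN : ((1:ℝ) / 2) ^ (N - 1) ≤ (1 - δ) ^ (N - 1) :=
      pow_le_pow_left₀ (by norm_num) (by linarith) _
    have hXsplit : v 1 ^ (q - 1) = v 1 ^ (q - p) * v 1 ^ (p - 1) := by
      rw [← Real.rpow_add hM0]
      congr 1
      ring
    have hmulexp : (v 1 * (1 - δ)) ^ (q - 1) = v 1 ^ (q - 1) * (1 - δ) ^ (q - 1) :=
      Real.mul_rpow hM0.le h1δ
    set X : ℝ := v 1 ^ (q - p) with hXdef
    set A : ℝ := v 1 ^ (p - 1) with hAdef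
    have hApos : 0 < A := Real.rpow_pos_of_pos hM0 _
    have hXpos : 0 < X := Real.rpow_pos_of_pos hM0 _
    have hkey : δ * (((1:ℝ)/2) ^ (N - 1) * (X * A) * (1/2)) ≤ A / N := by
      calc δ * (((1:ℝ)/2) ^ (N - 1) * (X * A) * (1/2))
          ≤ δ * ((1 - δ) ^ (N - 1) * (X * A) * ((1 - δ) ^ (q - 1))) := by
            have hXA : 0 ≤ X * A := by positivity
            apply mul_le_mul_of_nonneg_left _ hδpos.le
            apply mul_le_mul (mul_le_mul_of_nonneg_right hpowN hXA) hBern (by norm_num)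
            positivity
        _ = δ * ((1 - δ) ^ (N - 1) * (v 1 * (1 - δ)) ^ (q - 1)) := by
            rw [hmulexp, hXsplit]
            ring
        _ ≤ v 1 ^ (p - 1) / N := hchain
    have hAN : A / (N:ℝ) ≤ A := div_le_self hApos.le (by exact_mod_cast hN)
    have hkey2 : X * (δ * ((1:ℝ)/2) ^ (N - 1) * (1/2)) ≤ 1 := by
      have h2 : (X * (δ * ((1:ℝ)/2) ^ (N - 1) * (1/2))) * A ≤ 1 * A := by
        calc (X * (δ * ((1:ℝ)/2) ^ (N - 1) * (1/2))) * A
            = δ * (((1:ℝ)/2) ^ (N - 1) * (X * A) * (1/2)) := by ring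
          _ ≤ A / N := hkey
          _ ≤ A := hAN
          _ = 1 * A := (one_mul A).symm
      exact le_of_mul_le_mul_right h2 hApos
    have hcval : (δ * ((1:ℝ)/2) ^ (N - 1) * (1/2)) * (2 ^ (N + 1) * (q - 1)) = 1 := by
      have h2N : (2:ℝ) ^ (N + 1) = 2 ^ (N - 1) * 4 := by
        have : N + 1 = (N - 1) + 2 := by omega
        rw [this, pow_add]
        norm_num
      have hhalf : ((1:ℝ)/2) ^ (N - 1) * 2 ^ (N - 1) = 1 := by
        rw [← mul_pow]
        norm_num
      have h2ne : ((2:ℝ)) ^ (N - 1) ≠ 0 := by positivity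
      have hq1ne : q - 1 ≠ 0 := hqm1.ne'
      rw [hδdef, h2N]
      field_simp
      linear_combination 4 * hhalf
    have hBpos : (0:ℝ) < 2 ^ (N + 1) * (q - 1) := by positivity
    calc X = (X * (δ * ((1:ℝ)/2) ^ (N - 1) * (1/2))) * (2 ^ (N + 1) * (q - 1)) := by
          rw [mul_assoc, hcval, mul_one]
      _ ≤ 1 * (2 ^ (N + 1) * (q - 1)) := mul_le_mul_of_nonneg_right hkey2 hBpos.le
      _ = 2 ^ (N + 1) * (q - 1) := one_mul _
    -- Fact 4 : quantitative lower bound on v 0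
  have hF4 : ∀ ε : ℝ, 0 < ε → ε ≤ 1 →
      v 1 ≤ 1 + ((ε / 4) ^ (p - 1)) ^ N * (1 - (1 - ε / 2) ^ (p - 1)) / 3 → 1 - ε < v 0 := by
    intro ε hε0 hε1 hMb
    by_contra hcon
    push_neg at hcon
    set R : ℝ := (ε / 4) ^ (p - 1) with hRdef
    have hε4 : (0:ℝ) < ε / 4 := by linarith
    have hRpos : 0 < R := Real.rpow_pos_of_pos hε4 _
    have hRle1 : R ≤ 1 := Real.rpow_le_one hε4.le (by linarith) hpm1.le
    have hRinv : R ^ (p - 1)⁻¹ = ε / 4 := Real.rpow_rpow_inv hε4.le hpm1.ne'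
    set a : ℝ := (1 - ε / 2) ^ (p - 1) with hadef
    have ha1 : a < 1 := Real.rpow_lt_one (by linarith) (by linarith) hpm1
    have ha0 : 0 ≤ a := Real.rpow_nonneg (by linarith) _
    set c : ℝ := R ^ N * (1 - a) with hcdef
    have hcpos : 0 < c := mul_pos (pow_pos hRpos _) (by linarith)
    have hcle1 : c ≤ 1 := by
      have h1 : R ^ N ≤ 1 := pow_le_one₀ hRpos.le hRle1
      nlinarith only [h1, ha0, pow_nonneg hRpos.le N, hcdef]
    have hM2 : v 1 ≤ 2 := by linarith only [hMb, hcle1]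
    -- v is small on [0, R]
    have hvsmall : ∀ r ∈ Icc (0:ℝ) R, v r ≤ 1 - ε / 2 := by
      intro r hr
      have hr1 : r ∈ Icc (0:ℝ) 1 := ⟨hr.1, hr.2.trans hRle1⟩
      have hftc := hvftc 0 r le_rfl hr.1 hr1.2
      have hsub : uIcc (0:ℝ) r ⊆ uIcc (0:ℝ) 1 := by
        rw [huIcc, uIcc_of_le hr.1]; exact Icc_subset_Icc le_rfl hr1.2
      have hbd : (∫ s in (0:ℝ)..r, v' s) ≤ ∫ s in (0:ℝ)..r, (ε / 2 : ℝ) := by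
        apply intervalIntegral.integral_mono_on hr.1 (hintv'.mono_set hsub)
          intervalIntegrable_const
        intro x hx
        have hx1 : x ∈ Icc (0:ℝ) 1 := ⟨hx.1, (hx.2.trans hr.2).trans hRle1⟩
        calc v' x ≤ v 1 * x ^ (p - 1)⁻¹ := hv'bound x hx1
          _ ≤ 2 * R ^ (p - 1)⁻¹ := by
              apply mul_le_mul hM2
                (Real.rpow_le_rpow hx.1 (hx.2.trans hr.2) (inv_nonneg.2 hpm1.le))
                (Real.rpow_nonneg hx.1 _) (by norm_num)
          _ = ε / 2 := by rw [hRinv]; ring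
      rw [hftc, intervalIntegral.integral_const, smul_eq_mul] at hbd
      have hrε : (r - 0) * (ε / 2) ≤ ε / 2 := by nlinarith only [hr1.1, hr1.2, hε0]
      linarith only [hbd, hcon, hrε]
    -- split the integral of s^{N-1} v^{p-1}
    have hintp1 : IntervalIntegrable (fun s => s ^ (N - 1) * v s ^ (p - 1))
        MeasureTheory.volume 0 R :=
      (hintv (p - 1)).mono_set (by
        rw [huIcc, uIcc_of_le hRpos.le]; exact Icc_subset_Icc le_rfl hRle1)
    have hintp2 : IntervalIntegrable (fun s => s ^ (N - 1) * v s ^ (p - 1))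
        MeasureTheory.volume R 1 :=
      (hintv (p - 1)).mono_set (by
        rw [huIcc, uIcc_of_le hRle1]; exact Icc_subset_Icc hRpos.le le_rfl)
    have hsplit2 : (∫ s in (0:ℝ)..1, s ^ (N - 1) * v s ^ (p - 1))
        = (∫ s in (0:ℝ)..R, s ^ (N - 1) * v s ^ (p - 1))
          + ∫ s in R..1, s ^ (N - 1) * v s ^ (p - 1) :=
      (intervalIntegral.integral_add_adjacent_intervals hintp1 hintp2).symm
    have hI1 : (∫ s in (0:ℝ)..R, s ^ (N - 1) * v s ^ (p - 1)) ≤ R ^ N / N * a := by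
      have h1 : (∫ s in (0:ℝ)..R, s ^ (N - 1) * v s ^ (p - 1))
          ≤ ∫ s in (0:ℝ)..R, s ^ (N - 1) * a := by
        apply intervalIntegral.integral_mono_on hRpos.le hintp1
          ((hii _ (hcmon.mul continuousOn_const)).mono_set (by
            rw [huIcc, uIcc_of_le hRpos.le]; exact Icc_subset_Icc le_rfl hRle1))
        intro x hx
        have hx1 : x ∈ Icc (0:ℝ) 1 := ⟨hx.1, hx.2.trans hRle1⟩
        apply mul_le_mul_of_nonneg_left _ (pow_nonneg hx.1 _)
        beta_reduce
        exact Real.rpow_le_rpow (hvpos x hx1).le (hvsmall x hx) hpm1.le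
      rw [hIconst, zero_pow (by omega : N ≠ 0), sub_zero] at h1
      exact h1
    have hI2 : (∫ s in R..1, s ^ (N - 1) * v s ^ (p - 1)) ≤ (1 - R ^ N) / N * v 1 ^ (p - 1) := by
      have h1 : (∫ s in R..1, s ^ (N - 1) * v s ^ (p - 1))
          ≤ ∫ s in R..1, s ^ (N - 1) * v 1 ^ (p - 1) := by
        apply intervalIntegral.integral_mono_on hRle1 hintp2
          ((hii _ (hcmon.mul continuousOn_const)).mono_set (by
            rw [huIcc, uIcc_of_le hRle1]; exact Icc_subset_Icc hRpos.le le_rfl))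
        intro x hx
        have hx1 : x ∈ Icc (0:ℝ) 1 := ⟨le_trans hRpos.le hx.1, hx.2⟩
        exact mul_le_mul_of_nonneg_left
          (Real.rpow_le_rpow (hvpos x hx1).le (hvleM x hx1) hpm1.le) (pow_nonneg hx1.1 _)
      rw [hIconst, one_pow] at h1
      exact h1
    -- main chain
    have hmain : 1 / (N:ℝ) < v 1 * (R ^ N / N * a + (1 - R ^ N) / N * v 1 ^ (p - 1)) := by
      calc 1 / (N:ℝ) < ∫ s in (0:ℝ)..1, s ^ (N - 1) * v s ^ q := hC
        _ ≤ v 1 * ∫ s in (0:ℝ)..1, s ^ (N - 1) * v s ^ (q - 1) := hIq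
        _ = v 1 * ∫ s in (0:ℝ)..1, s ^ (N - 1) * v s ^ (p - 1) := by rw [hA]
        _ ≤ v 1 * (R ^ N / N * a + (1 - R ^ N) / N * v 1 ^ (p - 1)) := by
            apply mul_le_mul_of_nonneg_left _ hM0.le
            rw [hsplit2]
            linarith only [hI1, hI2]
    have hmain2 : 1 < v 1 * (R ^ N * a + (1 - R ^ N) * v 1 ^ (p - 1)) := by
      have hN' : (0:ℝ) < N := hNpos
      have : (1:ℝ) / N * 1 < 1 / N * (v 1 * (R ^ N * a + (1 - R ^ N) * v 1 ^ (p - 1))) := by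
        calc (1:ℝ) / N * 1 = 1 / N := mul_one _
          _ < v 1 * (R ^ N / N * a + (1 - R ^ N) / N * v 1 ^ (p - 1)) := hmain
          _ = 1 / N * (v 1 * (R ^ N * a + (1 - R ^ N) * v 1 ^ (p - 1))) := by ring
      exact lt_of_mul_lt_mul_left this (by positivity)
    -- contradiction arithmetic
    set M : ℝ := v 1 with hMdef
    set Mp : ℝ := M ^ (p - 1) with hMpdef
    have hMp1 : 1 ≤ Mp := by
      rw [hMpdef]
      calc (1:ℝ) = 1 ^ (p - 1) := (Real.one_rpow _).symm
        _ ≤ M ^ (p - 1) := Real.rpow_le_rpow zero_le_one hM1 hpm1.le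
    have hMMp : M * Mp = M ^ p := by
      rw [hMpdef, hMdef, mul_comm, ← Real.rpow_add_one hM0.ne' (p - 1), sub_add_cancel]
    have hstep2 : R ^ N * (1 - a) ≤ M * (R ^ N * (Mp - a)) := by
      have h1 : 1 - a ≤ Mp - a := by linarith
      have h2 : R ^ N * (1 - a) ≤ R ^ N * (Mp - a) :=
        mul_le_mul_of_nonneg_left h1 (pow_nonneg hRpos.le _)
      have hX0 : 0 ≤ R ^ N * (Mp - a) :=
        mul_nonneg (pow_nonneg hRpos.le _) (by linarith only [hMp1, ha1])
      nlinarith only [h2, hM1, hX0]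
    have hMple : M ^ p ≤ 1 + c := by
      have h1 : M ^ p ≤ (1 + c / 3) ^ p :=
        Real.rpow_le_rpow hM0.le hMb hp0.le
      have h2 : (1 + c / 3) ^ p ≤ (1 + c / 3) ^ (2:ℝ) :=
        Real.rpow_le_rpow_of_exponent_le (by linarith) hp2.le
      have h3 : (1 + c / 3) ^ (2:ℝ) = (1 + c / 3) ^ 2 := Real.rpow_two _
      nlinarith only [h1, h2, h3, hcpos, hcle1]
    have hexpand : M * (R ^ N * a + (1 - R ^ N) * Mp) = M * Mp - M * (R ^ N * (Mp - a)) := by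
      ring
    have : (1:ℝ) < 1 := by
      calc (1:ℝ) < M * (R ^ N * a + (1 - R ^ N) * Mp) := hmain2
        _ = M * Mp - M * (R ^ N * (Mp - a)) := hexpand
        _ ≤ M ^ p - R ^ N * (1 - a) := by
            linarith only [hstep2, hMMp]
        _ = M ^ p - c := by rw [hcdef]
        _ ≤ 1 + c - c := by linarith only [hMple]
        _ = 1 := by ring
    exact lt_irrefl _ this
    -- Fact 5 : gradient integral bound
  have hintvp : IntervalIntegrable (fun s => s ^ (N - 1) * v' s ^ p) MeasureTheory.volume 0 1 :=
    hii _ (hcmon.mul (hcv'p p hp0.le))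
  have hF5 : (∫ r in (0:ℝ)..1, r ^ (N - 1) * v' r ^ p) ≤ (v 1 ^ p - v 0 ^ p) / N := by
    have hsplitB : (∫ s in (0:ℝ)..1, s ^ (N - 1) * (v' s ^ p + v s ^ p - v s ^ q))
        = ((∫ s in (0:ℝ)..1, s ^ (N - 1) * v' s ^ p)
          + ∫ s in (0:ℝ)..1, s ^ (N - 1) * v s ^ p)
          - ∫ s in (0:ℝ)..1, s ^ (N - 1) * v s ^ q := by
      rw [← intervalIntegral.integral_add hintvp (hintv p),
        ← intervalIntegral.integral_sub (hintvp.add (hintv p)) (hintv q)]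
      apply intervalIntegral.integral_congr
      intro x _
      ring
    have hGeq : (∫ s in (0:ℝ)..1, s ^ (N - 1) * v' s ^ p)
        = (∫ s in (0:ℝ)..1, s ^ (N - 1) * v s ^ q)
          - ∫ s in (0:ℝ)..1, s ^ (N - 1) * v s ^ p := by
      rw [hsplitB] at hB
      linarith only [hB]
    have hup2 : (∫ s in (0:ℝ)..1, s ^ (N - 1) * v s ^ q) ≤ v 1 ^ p / N := by
      calc (∫ s in (0:ℝ)..1, s ^ (N - 1) * v s ^ q)
          ≤ v 1 * ∫ s in (0:ℝ)..1, s ^ (N - 1) * v s ^ (q - 1) := hIq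
        _ = v 1 * ∫ s in (0:ℝ)..1, s ^ (N - 1) * v s ^ (p - 1) := by rw [hA]
        _ ≤ v 1 * (v 1 ^ (p - 1) / N) := mul_le_mul_of_nonneg_left hIp hM0.le
        _ = v 1 ^ p / N := by
            rw [mul_div_assoc', mul_comm, ← Real.rpow_add_one hM0.ne' (p - 1), sub_add_cancel]
    have hlow2 : v 0 ^ p / N ≤ ∫ s in (0:ℝ)..1, s ^ (N - 1) * v s ^ p := by
      have h1 : (∫ s in (0:ℝ)..1, s ^ (N - 1) * v 0 ^ p)
          ≤ ∫ s in (0:ℝ)..1, s ^ (N - 1) * v s ^ p := by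
        apply intervalIntegral.integral_mono_on h01
          (hii _ (hcmon.mul continuousOn_const)) (hintv p)
        intro x hx
        exact mul_le_mul_of_nonneg_left
          (Real.rpow_le_rpow hm0.le (hvgem x hx) hp0.le) (pow_nonneg hx.1 _)
      rw [hIconst, one_pow, zero_pow (by omega : N ≠ 0), sub_zero] at h1
      have heq : v 0 ^ p / (N:ℝ) = 1 / (N:ℝ) * v 0 ^ p := by ring
      linarith only [h1, heq]
    rw [hGeq]
    have hfin : (v 1 ^ p - v 0 ^ p) / (N:ℝ) = v 1 ^ p / N - v 0 ^ p / N := by ring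
    linarith only [hup2, hlow2, hfin]
  exact ⟨hM1, hm1, hF3, hF4, hF5⟩


theorem highEnergy_solution_tendsto_one
    (N : ℕ) (hN : 1 ≤ N) (p : ℝ) (hp1 : 1 < p) (hp2 : p < 2)
    (q : ℕ → ℝ) (hq : ∀ n, p < q n) (hqtop : Tendsto q atTop atTop)
    (v v' : ℕ → ℝ → ℝ)
    (hsol : ∀ n, IsRadialNeumannSol N p (q n) (v n) (v' n))
    (hE : ∀ n, (1 / p - 1 / q n) * (1 / (N : ℝ)) <
      ∫ r in (0:ℝ)..1, r ^ (N - 1) *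
        (v' n r ^ p / p + v n r ^ p / p - v n r ^ q n / q n)) :
    TendstoUniformlyOn (fun n r => v n r) (fun _ => 1) atTop (Set.Icc (0:ℝ) 1) ∧
    Tendsto (fun n => ∫ r in (0:ℝ)..1, r ^ (N - 1) * v' n r ^ p) atTop (nhds 0) := by
  have h01 : (0:ℝ) ≤ 1 := zero_le_one
  have hq2ev : ∀ᶠ n in atTop, 2 ≤ q n := hqtop.eventually_ge_atTop 2
  have hmaster : ∀ᶠ n in atTop,
      1 ≤ v n 1 ∧ v n 0 ≤ 1 ∧
      v n 1 ^ (q n - p) ≤ 2 ^ (N + 1) * (q n - 1) ∧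
      (∀ ε : ℝ, 0 < ε → ε ≤ 1 →
        v n 1 ≤ 1 + ((ε / 4) ^ (p - 1)) ^ N * (1 - (1 - ε / 2) ^ (p - 1)) / 3 →
          1 - ε < v n 0) ∧
      (∫ r in (0:ℝ)..1, r ^ (N - 1) * v' n r ^ p) ≤ (v n 1 ^ p - v n 0 ^ p) / N := by
    filter_upwards [hq2ev] with n hn
    exact radial_master hN hp1 hp2 (hq n) hn (hsol n) (hE n)
  have hEB1 : ∀ ε : ℝ, 0 < ε → ∀ᶠ n in atTop, v n 1 ≤ 1 + ε := by
    intro ε hε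
    have hgrow := hqtop.eventually (growth_aux (2 ^ (N + 1)) ε p (by positivity) hε hp1.le)
    filter_upwards [hmaster, hgrow] with n hm hg
    by_contra hcon
    push_neg at hcon
    have h1 : (1 + ε) ^ (q n - p) < v n 1 ^ (q n - p) :=
      Real.rpow_lt_rpow (by linarith) hcon (by linarith [hq n])
    linarith only [h1, hm.2.2.1, hg]
  have hM1le : ∀ᶠ n in atTop, 1 ≤ v n 1 := hmaster.mono fun n h => h.1
  have hm1le : ∀ᶠ n in atTop, v n 0 ≤ 1 := hmaster.mono fun n h => h.2.1
  have hEB2 : ∀ ε : ℝ, 0 < ε → ∀ᶠ n in atTop, 1 - ε < v n 0 := by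
    intro ε hε
    set ε' := min ε 1 with hε'def
    have hε'0 : 0 < ε' := lt_min hε one_pos
    have hε'1 : ε' ≤ 1 := min_le_right _ _
    have hη : 0 < ((ε' / 4) ^ (p - 1)) ^ N * (1 - (1 - ε' / 2) ^ (p - 1)) / 3 := by
      have h1 : (0:ℝ) < (ε' / 4) ^ (p - 1) := Real.rpow_pos_of_pos (by linarith) _
      have h2 : (1 - ε' / 2 : ℝ) ^ (p - 1) < 1 :=
        Real.rpow_lt_one (by linarith) (by linarith) (by linarith)
      exact div_pos (mul_pos (pow_pos h1 N) (by linarith)) (by norm_num)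
    filter_upwards [hmaster, hEB1 _ hη] with n hm hb
    have h2 := hm.2.2.2.1 ε' hε'0 hε'1 hb
    have h3 : ε' ≤ ε := min_le_left _ _
    linarith only [h2, h3]
  have hMtend : Tendsto (fun n => v n 1) atTop (nhds 1) := by
    rw [Metric.tendsto_atTop]
    intro ε hε
    have hev := (hEB1 (ε/2) (by linarith)).and hM1le
    rw [eventually_atTop] at hev
    obtain ⟨A, hA⟩ := hev
    refine ⟨A, fun n hn => ?_⟩
    have h := hA n hn
    rw [Real.dist_eq, abs_lt]
    constructor <;> linarith [h.1, h.2]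
  have hmtend : Tendsto (fun n => v n 0) atTop (nhds 1) := by
    rw [Metric.tendsto_atTop]
    intro ε hε
    have hev := (hEB2 (ε/2) (by linarith)).and hm1le
    rw [eventually_atTop] at hev
    obtain ⟨A, hA⟩ := hev
    refine ⟨A, fun n hn => ?_⟩
    have h := hA n hn
    rw [Real.dist_eq, abs_lt]
    constructor <;> linarith [h.1, h.2]
  have hcontrpow : ContinuousAt (fun x : ℝ => x ^ p) 1 :=
    Real.continuousAt_rpow_const 1 p (Or.inl one_ne_zero)
  have ht1 : Tendsto (fun n => v n 1 ^ p) atTop (nhds 1) := by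
    have := hcontrpow.tendsto.comp hMtend
    simpa [Real.one_rpow, Function.comp_def] using this
  have ht0 : Tendsto (fun n => v n 0 ^ p) atTop (nhds 1) := by
    have := hcontrpow.tendsto.comp hmtend
    simpa [Real.one_rpow, Function.comp_def] using this
  have hgtend : Tendsto (fun n => (v n 1 ^ p - v n 0 ^ p) / (N:ℝ)) atTop (nhds 0) := by
    have := (ht1.sub ht0).div_const (N:ℝ)
    simpa using this
  refine ⟨?_, ?_⟩
  · rw [Metric.tendstoUniformlyOn_iff]
    intro ε hε
    filter_upwards [hEB1 (ε/2) (by linarith), hEB2 (ε/2) (by linarith)] with n h1 h2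
    intro r hr
    have hmono := (hsol n).2.2.2.1
    have hle := hmono hr (right_mem_Icc.2 h01) hr.2
    have hge := hmono (left_mem_Icc.2 h01) hr hr.1
    rw [Real.dist_eq, abs_lt]
    constructor <;> linarith [h1, h2, hle, hge]
  · apply squeeze_zero' (Filter.Eventually.of_forall ?_)
      (hmaster.mono fun n h => h.2.2.2.2) hgtend
    intro n
    apply intervalIntegral.integral_nonneg h01
    intro x hx
    exact mul_nonneg (pow_nonneg hx.1 _) (Real.rpow_nonneg ((hsol n).2.2.2.2.1 x hx) _)
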